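/- arXiv:0903.0182 — 2 statements merged into one kernel-verified Lean document; each statement's English description precedes it below -/
import Mathlib

section
/- Let Λ be a nonempty compact topological space and U : Λ × Λ → ℝ symmetric and lower semicontinuous. Define ε_g(N) = (1/(N(N-1))) · min_{q ∈ Λ^N} ∑_{1≤i<j≤N} U(q_i,q_j). Then the sequence N ↦ ε_g(N) is monotonically increasing: for all N ≥ 2, ε_g(N+1) ≥ ε_g(N). -/
/-- The total pairwise energy of a configuration of `N` points. -/
noncomputable def energy {Λ : Type*} (N : ℕ) (U : Λ → Λ → ℝ) (q : Fin N → Λ) : ℝ :=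
  ∑ i : Fin N, ∑ j ∈ Finset.Ioi i, U (q i) (q j)

/-- The pair-specific ground state energy `ε_g(N) = E_g(N)/(N(N-1))`. -/
noncomputable def epsg (Λ : Type*) (N : ℕ) (U : Λ → Λ → ℝ) : ℝ :=
  sInf (Set.range (energy (Λ := Λ) N U)) / ((N : ℝ) * ((N : ℝ) - 1))

/-- A lower semicontinuous real function on a nonempty compact space has bounded-below range. -/
lemma bddBelow_range_of_lsc {X : Type*} [TopologicalSpace X] [CompactSpace X] [Nonempty X]
    {f : X → ℝ} (hf : LowerSemicontinuous f) : BddBelow (Set.range f) := by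
  obtain ⟨t, ht⟩ := IsCompact.elim_finite_subcover (isCompact_univ (X := X))
    (fun x : X => f ⁻¹' Set.Ioi (f x - 1)) (fun x => hf.isOpen_preimage _)
    (fun x _ => Set.mem_iUnion.2 ⟨x, by simp⟩)
  have htne : t.Nonempty := by
    rcases Set.univ_nonempty (α := X) with ⟨x, -⟩
    have := ht (Set.mem_univ x)
    rcases Set.mem_iUnion₂.1 this with ⟨i, hi, -⟩
    exact ⟨i, hi⟩
  refine ⟨t.inf' htne (fun x => f x - 1), ?_⟩
  rintro _ ⟨x, rfl⟩
  have := ht (Set.mem_univ x)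
  rcases Set.mem_iUnion₂.1 this with ⟨i, hi, hx⟩
  have h1 : t.inf' htne (fun x => f x - 1) ≤ f i - 1 := Finset.inf'_le _ hi
  have h2 : f i - 1 < f x := hx
  linarith

/-- The energy functional is lower semicontinuous. -/
lemma lsc_energy {Λ : Type*} [TopologicalSpace Λ] (N : ℕ) (U : Λ → Λ → ℝ)
    (hlsc : LowerSemicontinuous (fun p : Λ × Λ => U p.1 p.2)) :
    LowerSemicontinuous (energy N U) := by
  apply lowerSemicontinuous_sum
  intro i _
  apply lowerSemicontinuous_sum
  intro j _
  have hc : Continuous (fun q : Fin N → Λ => (q i, q j)) :=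
    (continuous_apply i).prodMk (continuous_apply j)
  exact LowerSemicontinuous.comp hlsc hc

/-- Sum over the complement of a singleton. -/
lemma sum_compl_singleton {α : Type*} [Fintype α] [DecidableEq α] (i : α) (g : α → ℝ) :
    ∑ j ∈ ({i}ᶜ : Finset α), g j = (∑ j, g j) - g i := by
  have := Fintype.sum_eq_sum_compl_add i g
  linarith

/-- Twice the energy equals the off-diagonal double sum. -/
lemma two_mul_energy {Λ : Type*} (m : ℕ) (U : Λ → Λ → ℝ) (hsym : ∀ x y, U x y = U y x)
    (r : Fin m → Λ) :
    2 * energy m U r =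
      (∑ i : Fin m, ∑ j : Fin m, U (r i) (r j)) - ∑ i : Fin m, U (r i) (r i) := by
  have h := Finset.sum_sum_Ioi_add_eq_sum_sum_off_diag (fun i j : Fin m => U (r i) (r j))
  have hL : ∑ i : Fin m, ∑ j ∈ Finset.Ioi i, (U (r j) (r i) + U (r i) (r j))
      = 2 * energy m U r := by
    unfold energy
    rw [Finset.mul_sum]
    refine Finset.sum_congr rfl fun i _ => ?_
    rw [Finset.mul_sum]
    refine Finset.sum_congr rfl fun j _ => ?_
    rw [hsym (r j) (r i)]; ring
  rw [hL] at h
  have h' : 2 * energy m U r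
      = ∑ i : Fin m, ∑ j ∈ ({i}ᶜ : Finset (Fin m)), U (r j) (r i) := by
    convert h
  rw [h', ← Finset.sum_sub_distrib]
  refine Finset.sum_congr rfl fun i _ => ?_
  rw [sum_compl_singleton]
  have h2 : ∑ j : Fin m, U (r j) (r i) = ∑ j : Fin m, U (r i) (r j) :=
    Finset.sum_congr rfl fun j _ => hsym _ _
  rw [h2]

/-- Key counting identity: the sum over all deletions of one point of the `n`-point energies
equals `(n-1)` times the `(n+1)`-point energy. -/
lemma sum_energy_deletions {Λ : Type*} (n : ℕ) (U : Λ → Λ → ℝ) (hsym : ∀ x y, U x y = U y x)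
    (q : Fin (n + 1) → Λ) :
    ∑ k : Fin (n + 1), energy n U (q ∘ k.succAbove) = ((n : ℝ) - 1) * energy (n + 1) U q := by
  set f : Fin (n + 1) → Fin (n + 1) → ℝ := fun a b => U (q a) (q b) with hf
  have sumsA : ∀ (k : Fin (n + 1)) (g : Fin (n + 1) → ℝ),
      ∑ i : Fin n, g (k.succAbove i) = (∑ a, g a) - g k := by
    intro k g
    rw [Fin.sum_univ_succAbove g k]; ring
  set E2 : ℝ := ∑ a, ∑ b, f a b with hE2
  set D : ℝ := ∑ a, f a a with hD
  -- the double sum over the deleted configuration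
  have hE2k : ∀ k : Fin (n + 1),
      ∑ i : Fin n, ∑ j : Fin n, f (k.succAbove i) (k.succAbove j)
        = E2 - (∑ b, f k b) - ((∑ a, f a k) - f k k) := by
    intro k
    have : ∀ i : Fin n, ∑ j : Fin n, f (k.succAbove i) (k.succAbove j)
        = (∑ b, f (k.succAbove i) b) - f (k.succAbove i) k := fun i => sumsA k _
    rw [Finset.sum_congr rfl fun i _ => this i, Finset.sum_sub_distrib,
      sumsA k (fun a => ∑ b, f a b), sumsA k (fun a => f a k)]
  have hDk : ∀ k : Fin (n + 1),
      ∑ i : Fin n, f (k.succAbove i) (k.succAbove i) = D - f k k := by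
    intro k
    exact sumsA k (fun a => f a a)
  -- sum over k of twice the deleted energies
  have h2 : ∀ k : Fin (n + 1), 2 * energy n U (q ∘ k.succAbove)
      = (∑ i : Fin n, ∑ j : Fin n, f (k.succAbove i) (k.succAbove j))
        - ∑ i : Fin n, f (k.succAbove i) (k.succAbove i) := by
    intro k
    exact two_mul_energy n U hsym (q ∘ k.succAbove)
  have hcol : ∑ k : Fin (n + 1), ∑ a, f a k = E2 := by
    rw [hE2]; exact Finset.sum_comm
  have htot : ∑ k : Fin (n + 1), (2 * energy n U (q ∘ k.succAbove))
      = ((n : ℝ) - 1) * (E2 - D) := by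
    calc ∑ k : Fin (n + 1), (2 * energy n U (q ∘ k.succAbove))
        = ∑ k : Fin (n + 1),
            ((E2 - (∑ b, f k b) - ((∑ a, f a k) - f k k)) - (D - f k k)) := by
          refine Finset.sum_congr rfl fun k _ => ?_
          rw [h2 k, hE2k k, hDk k]
      _ = (n + 1 : ℝ) * E2 - E2 - (E2 - D) - ((n + 1 : ℝ) * D - D) := by
          simp only [Finset.sum_sub_distrib, Finset.sum_const, Finset.card_univ,
            Fintype.card_fin, nsmul_eq_mul, hcol, ← hE2, ← hD]
          push_cast; ring
      _ = ((n : ℝ) - 1) * (E2 - D) := by ring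
  have h2big : 2 * energy (n + 1) U q = E2 - D := two_mul_energy (n + 1) U hsym q
  have : 2 * (∑ k : Fin (n + 1), energy n U (q ∘ k.succAbove))
      = 2 * (((n : ℝ) - 1) * energy (n + 1) U q) := by
    rw [Finset.mul_sum]
    calc ∑ k : Fin (n + 1), 2 * energy n U (q ∘ k.succAbove)
        = ((n : ℝ) - 1) * (E2 - D) := htot
      _ = ((n : ℝ) - 1) * (2 * energy (n + 1) U q) := by rw [← h2big]
      _ = 2 * (((n : ℝ) - 1) * energy (n + 1) U q) := by ring
  linarith

/-- the pair-specific ground state energy is monotonically increasing: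
`ε_g(N+1) ≥ ε_g(N)` for all `N ≥ 2`. -/
theorem pairSpecific_monotone {Λ : Type*} [TopologicalSpace Λ] [CompactSpace Λ]
    [Nonempty Λ] (U : Λ → Λ → ℝ) (hsym : ∀ x y, U x y = U y x)
    (hlsc : LowerSemicontinuous (fun p : Λ × Λ => U p.1 p.2))
    (N : ℕ) (hN : 2 ≤ N) :
    epsg Λ (N + 1) U ≥ epsg Λ N U := by
  have hNR : (2 : ℝ) ≤ (N : ℝ) := by exact_mod_cast hN
  set A : ℝ := sInf (Set.range (energy (Λ := Λ) N U)) with hA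
  set B : ℝ := sInf (Set.range (energy (Λ := Λ) (N + 1) U)) with hB
  have bddA : BddBelow (Set.range (energy (Λ := Λ) N U)) :=
    bddBelow_range_of_lsc (lsc_energy N U hlsc)
  have neB : (Set.range (energy (Λ := Λ) (N + 1) U)).Nonempty := Set.range_nonempty _
  -- key inequality : (N+1) * A ≤ (N-1) * B
  have key : ((N : ℝ) + 1) * A ≤ ((N : ℝ) - 1) * B := by
    have hpos : (0 : ℝ) < (N : ℝ) - 1 := by linarith
    have hq : ∀ q : Fin (N + 1) → Λ,
        ((N : ℝ) + 1) * A / ((N : ℝ) - 1) ≤ energy (N + 1) U q := by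
      intro q
      have hsum := sum_energy_deletions N U hsym q
      have hge : ((N : ℝ) + 1) * A ≤ ∑ k : Fin (N + 1), energy N U (q ∘ k.succAbove) := by
        have : ∀ k : Fin (N + 1), A ≤ energy N U (q ∘ k.succAbove) := fun k =>
          csInf_le bddA (Set.mem_range_self _)
        calc ((N : ℝ) + 1) * A = ∑ _k : Fin (N + 1), A := by
              simp only [Finset.sum_const, Finset.card_univ, Fintype.card_fin, nsmul_eq_mul]
              push_cast; ring
          _ ≤ ∑ k : Fin (N + 1), energy N U (q ∘ k.succAbove) :=
              Finset.sum_le_sum fun k _ => this k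
      rw [div_le_iff₀ hpos]
      nlinarith [hge, hsum]
    have hle : ((N : ℝ) + 1) * A / ((N : ℝ) - 1) ≤ B := by
      apply le_csInf neB
      rintro _ ⟨q, rfl⟩
      exact hq q
    calc ((N : ℝ) + 1) * A = (((N : ℝ) + 1) * A / ((N : ℝ) - 1)) * ((N : ℝ) - 1) := by
          field_simp
      _ ≤ B * ((N : ℝ) - 1) := by
          apply mul_le_mul_of_nonneg_right hle (le_of_lt hpos)
      _ = ((N : ℝ) - 1) * B := by ring
  -- conclude
  unfold epsg
  rw [ge_iff_le, div_le_div_iff₀ (by nlinarith) (by push_cast; nlinarith)]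
  push_cast
  nlinarith [key]
end

section
/- Let Λ be a nonempty compact topological space and U : Λ × Λ → ℝ symmetric and lower semicontinuous, with ground state energies E_g(N). Suppose E : ℕ → ℝ is a sequence of 'experimental' energies satisfying E(M) ≥ E_g(M) for all M ≥ 2 (each experimental value is the energy of some configuration, hence an upper bound). If for some N ≥ 2 and n ≥ 1 one has E(N+n)/((N+n)(N+n-1)) < E(N)/(N(N-1)), then E(N) > E_g(N) strictly; i.e., E(N) is not the true ground state energy. -/
/-- The ground state energy of `N` points in `Λ`. -/
noncomputable def Eg (Λ : Type*) (N : ℕ) (U : Λ → Λ → ℝ) : ℝ :=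
  sInf (Set.range (energy (Λ := Λ) N U))

lemma lsc_bddBelow {α : Type*} [TopologicalSpace α] [CompactSpace α] [Nonempty α]
    {f : α → ℝ} (hf : LowerSemicontinuous f) : ∃ c, ∀ x, c ≤ f x := by
  obtain ⟨t, ht⟩ := IsCompact.elim_finite_subcover isCompact_univ
    (fun x : α => f ⁻¹' Set.Ioi (f x - 1)) (fun x => hf.isOpen_preimage _)
    (fun y _ => Set.mem_iUnion.2 ⟨y, by simp⟩)
  have htne : t.Nonempty := by
    by_contra h
    rw [Finset.not_nonempty_iff_eq_empty] at h
    obtain ⟨y⟩ := ‹Nonempty α›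
    have := ht (Set.mem_univ y)
    simp [h] at this
  refine ⟨t.inf' htne (fun x => f x - 1), fun y => ?_⟩
  obtain ⟨x, hx, hxy⟩ := Set.mem_iUnion₂.1 (ht (Set.mem_univ y))
  exact le_trans (Finset.inf'_le _ hx) (le_of_lt hxy)

lemma energy_eq {Λ : Type*} (N : ℕ) (U : Λ → Λ → ℝ) (q : Fin N → Λ) :
    energy N U q =
      ∑ p ∈ Finset.univ.filter (fun p : Fin N × Fin N => p.1 < p.2), U (q p.1) (q p.2) := by
  rw [energy, Finset.sum_filter, ← Finset.univ_product_univ, Finset.sum_product]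
  refine Finset.sum_congr rfl fun i _ => ?_
  rw [← Finset.sum_filter, Finset.filter_lt_eq_Ioi]

lemma image_pairs {N : ℕ} (k : Fin (N + 1)) :
    (Finset.univ.filter (fun p : Fin N × Fin N => p.1 < p.2)).image
        (fun p : Fin N × Fin N => (k.succAbove p.1, k.succAbove p.2)) =
      Finset.univ.filter (fun p : Fin (N+1) × Fin (N+1) => p.1 < p.2 ∧ p.1 ≠ k ∧ p.2 ≠ k) := by
  ext p
  simp only [Finset.mem_image, Finset.mem_filter, Finset.mem_univ, true_and]
  constructor
  · rintro ⟨⟨i, j⟩, hij, rfl⟩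
    exact ⟨Fin.succAbove_lt_succAbove_iff.2 hij, Fin.succAbove_ne k i, Fin.succAbove_ne k j⟩
  · rintro ⟨hlt, h1, h2⟩
    obtain ⟨i, hi⟩ := Fin.exists_succAbove_eq h1
    obtain ⟨j, hj⟩ := Fin.exists_succAbove_eq h2
    exact ⟨(i, j), Fin.succAbove_lt_succAbove_iff.1 (by rw [hi, hj]; exact hlt),
      by rw [hi, hj]⟩

lemma sum_removals {Λ : Type*} (N : ℕ) (hN : 1 ≤ N) (U : Λ → Λ → ℝ) (q : Fin (N+1) → Λ) :
    ∑ k : Fin (N+1), energy N U (fun i => q (k.succAbove i)) =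
      ((N : ℝ) - 1) * energy (N+1) U q := by
  have key : ∀ k : Fin (N+1), energy N U (fun i => q (k.succAbove i)) =
      ∑ p ∈ Finset.univ.filter (fun p : Fin (N+1) × Fin (N+1) => p.1 < p.2),
        if p.1 ≠ k ∧ p.2 ≠ k then U (q p.1) (q p.2) else 0 := by
    intro k
    rw [energy_eq, ← Finset.sum_filter, Finset.filter_filter,
      ← image_pairs k, Finset.sum_image]
    intro x _ y _ h
    have h1 := Fin.succAbove_right_injective (p := k) (congrArg Prod.fst h)
    have h2 := Fin.succAbove_right_injective (p := k) (congrArg Prod.snd h)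
    exact Prod.ext h1 h2
  calc ∑ k : Fin (N+1), energy N U (fun i => q (k.succAbove i))
      = ∑ p ∈ Finset.univ.filter (fun p : Fin (N+1) × Fin (N+1) => p.1 < p.2),
          ∑ k : Fin (N+1), if p.1 ≠ k ∧ p.2 ≠ k then U (q p.1) (q p.2) else 0 := by
        rw [← Finset.sum_comm]; exact Finset.sum_congr rfl fun k _ => key k
    _ = ((N : ℝ) - 1) * energy (N+1) U q := by
        rw [energy_eq, Finset.mul_sum]
        refine Finset.sum_congr rfl fun p hp => ?_
        have hne : p.1 ≠ p.2 := ne_of_lt (Finset.mem_filter.1 hp).2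
        rw [← Finset.sum_filter, Finset.sum_const]
        have hcard : (Finset.univ.filter (fun k : Fin (N+1) => p.1 ≠ k ∧ p.2 ≠ k)) =
            Finset.univ \ {p.1, p.2} := by
          ext k; simp [eq_comm, and_comm]
        rw [hcard, Finset.card_sdiff_of_subset (by simp)]
        have h2 : ({p.1, p.2} : Finset (Fin (N+1))).card = 2 := by
          rw [Finset.card_insert_of_notMem (by simpa using hne), Finset.card_singleton]
        rw [Finset.card_univ, Fintype.card_fin, h2, nsmul_eq_mul]
        have hcast : ((N + 1 - 2 : ℕ) : ℝ) = (N : ℝ) - 1 := by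
          have : N + 1 - 2 = N - 1 := rfl
          rw [this, Nat.cast_sub hN, Nat.cast_one]
        rw [hcast]

section Analytic
variable {Λ : Type*} [TopologicalSpace Λ] [CompactSpace Λ] [Nonempty Λ]
variable (U : Λ → Λ → ℝ)

lemma energy_bddBelow (hlsc : LowerSemicontinuous (fun p : Λ × Λ => U p.1 p.2)) (N : ℕ) :
    BddBelow (Set.range (energy (Λ := Λ) N U)) := by
  obtain ⟨c, hc⟩ := lsc_bddBelow hlsc
  refine ⟨((Finset.univ.filter (fun p : Fin N × Fin N => p.1 < p.2)).card : ℝ) * c, ?_⟩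
  rintro x ⟨q, rfl⟩
  rw [energy_eq]
  calc ((Finset.univ.filter (fun p : Fin N × Fin N => p.1 < p.2)).card : ℝ) * c
      = ∑ _p ∈ Finset.univ.filter (fun p : Fin N × Fin N => p.1 < p.2), c := by
        rw [Finset.sum_const, nsmul_eq_mul]
    _ ≤ _ := Finset.sum_le_sum fun p _ => hc (q p.1, q p.2)

lemma Eg_le_energy (hlsc : LowerSemicontinuous (fun p : Λ × Λ => U p.1 p.2))
    (N : ℕ) (q : Fin N → Λ) : Eg Λ N U ≤ energy N U q :=
  csInf_le (energy_bddBelow U hlsc N) ⟨q, rfl⟩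

lemma Eg_step (hlsc : LowerSemicontinuous (fun p : Λ × Λ => U p.1 p.2))
    (N : ℕ) (hN : 2 ≤ N) :
    ((N : ℝ) + 1) * Eg Λ N U ≤ ((N : ℝ) - 1) * Eg Λ (N+1) U := by
  have hN1 : (1 : ℝ) ≤ (N : ℝ) := by exact_mod_cast Nat.one_le_of_lt hN
  have hpos : (0 : ℝ) < (N : ℝ) - 1 := by
    have : (2 : ℝ) ≤ (N : ℝ) := by exact_mod_cast hN
    linarith
  have key : ∀ q : Fin (N+1) → Λ,
      ((N : ℝ) + 1) * Eg Λ N U ≤ ((N : ℝ) - 1) * energy (N+1) U q := by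
    intro q
    have := sum_removals N (by omega) U q
    calc ((N : ℝ) + 1) * Eg Λ N U
        = ∑ _k : Fin (N+1), Eg Λ N U := by
          rw [Finset.sum_const, nsmul_eq_mul, Finset.card_univ, Fintype.card_fin]
          push_cast; ring
      _ ≤ ∑ k : Fin (N+1), energy N U (fun i => q (k.succAbove i)) :=
          Finset.sum_le_sum fun k _ => Eg_le_energy U hlsc N _
      _ = ((N : ℝ) - 1) * energy (N+1) U q := this
  have hle : ∀ q : Fin (N+1) → Λ,
      ((N : ℝ) + 1) * Eg Λ N U / ((N : ℝ) - 1) ≤ energy (N+1) U q := by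
    intro q
    rw [div_le_iff₀ hpos]
    linarith [key q]
  have : ((N : ℝ) + 1) * Eg Λ N U / ((N : ℝ) - 1) ≤ Eg Λ (N+1) U := by
    refine le_csInf (Set.range_nonempty _) ?_
    rintro x ⟨q, rfl⟩
    exact hle q
  rw [div_le_iff₀ hpos] at this
  linarith

lemma eps_mono (hlsc : LowerSemicontinuous (fun p : Λ × Λ => U p.1 p.2))
    (N : ℕ) (hN : 2 ≤ N) : ∀ n : ℕ,
    Eg Λ N U / ((N : ℝ) * ((N : ℝ) - 1)) ≤
      Eg Λ (N + n) U / (((N : ℝ) + n) * ((N : ℝ) + n - 1)) := by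
  intro n
  induction n with
  | zero => simp
  | succ m ih =>
    refine le_trans ih ?_
    have hM : 2 ≤ N + m := by omega
    have hstep := Eg_step U hlsc (N + m) hM
    have hMr : (2 : ℝ) ≤ ((N + m : ℕ) : ℝ) := by exact_mod_cast hM
    set M : ℝ := ((N + m : ℕ) : ℝ) with hMdef
    have h1 : (0 : ℝ) < M - 1 := by linarith
    have h2 : (0 : ℝ) < M := by linarith
    have h3 : (0 : ℝ) < M + 1 := by linarith
    have hcast1 : (N : ℝ) + m = M := by push_cast [hMdef]; ring
    have hcast2 : (N : ℝ) + (m + 1 : ℕ) = M + 1 := by push_cast [hMdef]; ring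
    have hEg : Eg Λ (N + (m + 1)) U = Eg Λ ((N + m) + 1) U := by ring_nf
    rw [hcast2, hEg, hcast1]
    rw [div_le_div_iff₀ (by nlinarith : (0:ℝ) < M * (M - 1)) (by nlinarith : (0:ℝ) < (M+1) * (M+1-1))]
    nlinarith [hstep, h1, h2, h3]

end Analytic

/-- if experimental energies `E(M) ≥ E_g(M)` fail a pair-specific
monotonicity test, i.e. `E(N+n)/((N+n)(N+n-1)) < E(N)/(N(N-1))`, then `E(N) > E_g(N)`
strictly. -/
theorem monotonicity_test_failure {Λ : Type*} [TopologicalSpace Λ] [CompactSpace Λ]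
    [Nonempty Λ] (U : Λ → Λ → ℝ) (hsym : ∀ x y, U x y = U y x)
    (hlsc : LowerSemicontinuous (fun p : Λ × Λ => U p.1 p.2))
    (E : ℕ → ℝ) (hE : ∀ M, 2 ≤ M → E M ≥ Eg Λ M U)
    (N n : ℕ) (hN : 2 ≤ N) (hn : 1 ≤ n)
    (hfail : E (N + n) / (((N : ℝ) + n) * ((N : ℝ) + n - 1)) <
      E N / ((N : ℝ) * ((N : ℝ) - 1))) :
    E N > Eg Λ N U := by
  have hNr : (2 : ℝ) ≤ (N : ℝ) := by exact_mod_cast hN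
  have hD : (0 : ℝ) < (N : ℝ) * ((N : ℝ) - 1) := by nlinarith
  have hD' : (0 : ℝ) < ((N : ℝ) + n) * ((N : ℝ) + n - 1) := by
    have : (0 : ℝ) ≤ (n : ℕ) := Nat.cast_nonneg n
    nlinarith
  have h1 := eps_mono U hlsc N hN n
  have h2 : Eg Λ (N + n) U ≤ E (N + n) := hE (N + n) (by omega)
  have h3 : Eg Λ (N + n) U / (((N : ℝ) + n) * ((N : ℝ) + n - 1)) ≤
      E (N + n) / (((N : ℝ) + n) * ((N : ℝ) + n - 1)) :=
    (div_le_div_iff_of_pos_right hD').2 h2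
  have h4 : Eg Λ N U / ((N : ℝ) * ((N : ℝ) - 1)) < E N / ((N : ℝ) * ((N : ℝ) - 1)) :=
    lt_of_le_of_lt (le_trans h1 h3) hfail
  exact (div_lt_div_iff_of_pos_right hD).1 h4
end
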